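/- Let ℜ be a nonempty loc-deterministic set of P-rules satisfying Assumptions 1 and 2 in which every constant occurs. Consider the sequent C = (φ1 * φ2) ⋏ (ξ1 ∧ ξ2) ⊢_ℜ^V (ψ1 * ψ2) ⋏ (ζ1 ∧ ζ2) with φ1 ≠ emp and φ2 ≠ emp, and the two premises Pi = φi ⋏ ξi ⊢_ℜ^{V + alloc(φ_{3−i})} ψi ⋏ ζi for i = 1, 2 (V + alloc(φ_{3−i}) denoting multiset sum). If (s,h) is a counter-model of C, then for some i ∈ {1,2} the sequent Pi admits a counter-model of the form (s, h') where h' is a proper subheap of h (h' ⊆ h and h' ≠ h). In particular, if P1 and P2 are both valid then C is valid (soundness of rule S). -/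

import Mathlib

open scoped Classical

namespace SLID

/-! ## Signatures, terms and formulas -/

/-- A signature: a set of sorts with a distinguished sort `loc` of memory locations,
predicate symbols with profiles (the first parameter being of sort `loc`),
and constants of each sort (no constants of sort `loc`). -/
structure Sig : Type 1 where
  Srt : Type
  loc : Srt
  Pred : Type
  arity : Pred → ℕ
  arity_pos : ∀ p, 0 < arity p
  psort : Pred → ℕ → Srt
  psort_zero : ∀ p, psort p 0 = loc
  Const : Srt → Type
  noLocConst : IsEmpty (Const loc)

variable {σ : Sig}

/-- Terms: variables of each sort (a countably infinite supply, indexed by `ℕ`)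
and constants. -/
inductive Term (σ : Sig) : Type where
  | var (s : σ.Srt) (n : ℕ) : Term σ
  | cst (s : σ.Srt) (c : σ.Const s) : Term σ

/-- The sort of a term. -/
def Term.sort : Term σ → σ.Srt
  | .var s _ => s
  | .cst s _ => s

/-- Variables, as (sort, index) pairs. -/
abbrev Vr (σ : Sig) : Type := σ.Srt × ℕ

/-- The set of variables of a term. -/
def Term.varSet : Term σ → Set (Vr σ)
  | .var s n => {(s, n)}
  | .cst _ _ => ∅

/-- Spatial atoms: points-to atoms `x ↦ (t₁,…,tₖ)` and predicate atoms
`p(x, t₂,…,tₙ)`.  The root `x` is a variable of sort `loc`, represented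
by its index. -/
inductive SAtom (σ : Sig) : Type where
  | pto (x : ℕ) (ts : List (Term σ)) : SAtom σ
  | pred (p : σ.Pred) (x : ℕ) (args : List (Term σ)) : SAtom σ

/-- The root of a spatial atom. -/
def SAtom.root : SAtom σ → ℕ
  | .pto x _ => x
  | .pred _ x _ => x

/-- The term at position `i` (0-indexed; position `0` is the root) of a
predicate atom. -/
def SAtom.argAt : SAtom σ → ℕ → Option (Term σ)
  | .pred _ x _, 0 => some (Term.var σ.loc x)
  | .pred _ _ args, j + 1 => args[j]?
  | .pto _ _, _ => none

/-- The set of terms occurring in a spatial atom. -/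
def SAtom.termSet : SAtom σ → Set (Term σ)
  | .pto x ts => insert (Term.var σ.loc x) {t | t ∈ ts}
  | .pred _ x args => insert (Term.var σ.loc x) {t | t ∈ args}

/-- The set of variables of a spatial atom. -/
def SAtom.varSet (a : SAtom σ) : Set (Vr σ) := ⋃ t ∈ SAtom.termSet a, Term.varSet t

/-- Pure atoms: equations `t ≈ u` and disequations `t ≉ u`. -/
inductive PAtom (σ : Sig) : Type where
  | eq (t u : Term σ) : PAtom σ
  | ne (t u : Term σ) : PAtom σ

/-- The set of terms occurring in a pure atom. -/
def PAtom.termSet : PAtom σ → Set (Term σ)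
  | .eq t u => {t, u}
  | .ne t u => {t, u}

/-- The set of variables of a pure atom. -/
def PAtom.varSet (a : PAtom σ) : Set (Vr σ) := ⋃ t ∈ PAtom.termSet a, Term.varSet t

/-- Spatial formulas: finite `*`-conjunctions of spatial atoms, taken modulo
associativity-commutativity of `*` (hence multisets); `emp` is `0` and `*` is `+`. -/
abbrev Spatial (σ : Sig) : Type := Multiset (SAtom σ)

/-- Pure formulas: finite conjunctions of equations and disequations, taken modulo
associativity-commutativity of `∧` (hence multisets); `⊤` is `0` and `∧` is `+`. -/
abbrev PureF (σ : Sig) : Type := Multiset (PAtom σ)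

/-- A symbolic heap `φ ⋏ ξ` with `φ` spatial and `ξ` pure. -/
structure SymHeap (σ : Sig) : Type where
  sp : Spatial σ
  pu : PureF σ

/-- The set of variables of a spatial formula. -/
def Spatial.varSet (φ : Spatial σ) : Set (Vr σ) := {v | ∃ a ∈ φ, v ∈ SAtom.varSet a}

/-- The set of variables of a pure formula. -/
def PureF.varSet (ξ : PureF σ) : Set (Vr σ) := {v | ∃ a ∈ ξ, v ∈ PAtom.varSet a}

/-- The set of variables of a symbolic heap. -/
def SymHeap.varSet (l : SymHeap σ) : Set (Vr σ) := Spatial.varSet l.sp ∪ PureF.varSet l.pu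

/-- The set of terms occurring in a symbolic heap. -/
def SymHeap.termSet (l : SymHeap σ) : Set (Term σ) :=
  {t | ∃ a ∈ l.sp, t ∈ SAtom.termSet a} ∪ {t | ∃ a ∈ l.pu, t ∈ PAtom.termSet a}

/-- `alloc(φ)`: the multiset of roots of the spatial atoms of `φ`
(as indices of variables of sort `loc`). -/
def alloc (φ : Spatial σ) : Multiset ℕ := φ.map SAtom.root

/-- `alloc(λ)` for a symbolic heap `λ`. -/
def SymHeap.alloc (l : SymHeap σ) : Multiset ℕ := SLID.alloc l.sp

/-- Sort-correctness of a pure atom. -/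
def PAtom.WF : PAtom σ → Prop
  | .eq t u => Term.sort t = Term.sort u
  | .ne t u => Term.sort t = Term.sort u

/-- Sort-correctness of a spatial atom. -/
def SAtom.WF : SAtom σ → Prop
  | .pto _ _ => True
  | .pred p _ args => args.length + 1 = σ.arity p ∧
      ∀ (i : ℕ) (hi : i < args.length), Term.sort (args[i]'hi) = σ.psort p (i + 1)

/-- Sort-correctness of a symbolic heap. -/
def SymHeap.WF (l : SymHeap σ) : Prop := (∀ a ∈ l.sp, SAtom.WF a) ∧ (∀ a ∈ l.pu, PAtom.WF a)

/-! ## Inductive rules -/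

/-- An inductive rule `p(x₁,…,xₙ) ⇐ λ`: the parameters `x₁,…,xₙ` are pairwise
distinct variables of the profile sorts of the head `p`, and the body `λ` is a
symbolic heap. -/
structure Rule (σ : Sig) : Type where
  head : σ.Pred
  param : ℕ → ℕ
  param_inj : ∀ i j, i < σ.arity head → j < σ.arity head → i ≠ j →
    ((σ.psort head i, param i) : Vr σ) ≠ ((σ.psort head j, param j) : Vr σ)
  body : SymHeap σ
  body_wf : SymHeap.WF body

/-- The `i`-th parameter of a rule, as a term. -/
def Rule.paramTerm (r : Rule σ) (i : ℕ) : Term σ := Term.var (σ.psort r.head i) (r.param i)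

/-- The set of parameters of a rule, as terms. -/
def Rule.paramTermSet (r : Rule σ) : Set (Term σ) := {t | ∃ i < σ.arity r.head, t = r.paramTerm i}

/-- The set of parameters of a rule, as variables. -/
def Rule.paramVarSet (r : Rule σ) : Set (Vr σ) :=
  {v | ∃ i < σ.arity r.head, v = ((σ.psort r.head i, r.param i) : Vr σ)}

/-- The set of terms occurring in (the body of) a rule. -/
def Rule.termSet (r : Rule σ) : Set (Term σ) := SymHeap.termSet r.body

/-- P-rules: rules of the form
`p(x₁,…,xₙ) ⇐ (x₁ ↦ (y₁,…,yₖ) * q₁(z₁,u⃗₁) * ⋯ * qₘ(zₘ,u⃗ₘ)) ⋏ ξ` where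
(1) `ξ` is a conjunction of disequations `u ≉ v` with `u ∈ {x₁,…,xₙ,y₁,…,yₖ}`
    and `v ∈ {y₁,…,yₖ} ∖ {x₁,…,xₙ}`;
(2) `{z₁,…,zₘ} = ({y₁,…,yₖ} ∖ {x₁,…,xₙ}) ∩ V_loc`, with `z₁,…,zₘ` pairwise distinct;
(3) every element of each `u⃗ᵢ` is a parameter, one of the `yⱼ`, or a constant. -/
def Rule.IsPRule (r : Rule σ) : Prop :=
  ∃ (ys : List (Term σ)) (ps : Multiset (SAtom σ)),
    r.body.sp = (SAtom.pto (r.param 0) ys) ::ₘ ps ∧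
    (∀ a ∈ ps, ∃ (q : σ.Pred) (z : ℕ) (args : List (Term σ)), a = SAtom.pred q z args) ∧
    (∀ pa ∈ r.body.pu, ∃ u v : Term σ, pa = PAtom.ne u v ∧
      (u ∈ Rule.paramTermSet r ∨ u ∈ ys) ∧ (v ∈ ys ∧ v ∉ Rule.paramTermSet r)) ∧
    ({t : Term σ | ∃ a ∈ ps, t = Term.var σ.loc (SAtom.root a)} =
      {t : Term σ | t ∈ ys ∧ t ∉ Rule.paramTermSet r ∧ Term.sort t = σ.loc}) ∧
    Multiset.Nodup (Multiset.map SAtom.root ps) ∧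
    (∀ a ∈ ps, ∀ (q : σ.Pred) (z : ℕ) (args : List (Term σ)), a = SAtom.pred q z args →
      ∀ t ∈ args, t ∈ Rule.paramTermSet r ∨ t ∈ ys ∨ ∃ (s : σ.Srt) (c : σ.Const s), t = Term.cst s c)

/-- Productive predicate symbols (least fixpoint): `p` is productive w.r.t. `R`
if `R` contains a rule for `p` all of whose body predicates are productive. -/
inductive Productive (R : Set (Rule σ)) : σ.Pred → Prop where
  | intro (r : Rule σ) : r ∈ R →
      (∀ (q : σ.Pred) (z : ℕ) (args : List (Term σ)),
        SAtom.pred q z args ∈ r.body.sp → Productive R q) →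
      Productive R r.head

/-- `out_ℜ(p)` (0-indexed): outgoing parameter indices, as a least fixpoint. -/
inductive OutParam (R : Set (Rule σ)) : σ.Pred → ℕ → Prop where
  | pto (r : Rule σ) (i : ℕ) (ts : List (Term σ)) :
      r ∈ R → i < σ.arity r.head → σ.psort r.head i = σ.loc →
      SAtom.pto (r.param 0) ts ∈ r.body.sp → r.paramTerm i ∈ ts →
      OutParam R r.head i
  | pred (r : Rule σ) (i : ℕ) (q : σ.Pred) (z : ℕ) (args : List (Term σ)) (j : ℕ) :
      r ∈ R → i < σ.arity r.head → σ.psort r.head i = σ.loc →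
      SAtom.pred q z args ∈ r.body.sp → OutParam R q j →
      SAtom.argAt (SAtom.pred q z args) j = some (r.paramTerm i) →
      OutParam R r.head i

/-- The relation `x →_φ y` on variables of sort `loc` (Definition of `→`):
`φ` contains a predicate atom with root `x` and `y` at an outgoing position,
or a points-to atom with root `x` and `y` in its tuple. -/
def PathTo (R : Set (Rule σ)) (φ : Spatial σ) (x y : ℕ) : Prop :=
  (∃ ts, SAtom.pto x ts ∈ φ ∧ Term.var σ.loc y ∈ ts) ∨
  (∃ (p : σ.Pred) (args : List (Term σ)) (i : ℕ), SAtom.pred p x args ∈ φ ∧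
    OutParam R p i ∧ SAtom.argAt (SAtom.pred p x args) i = some (Term.var σ.loc y))

/-! ## Substitutions and renamings -/

/-- A (sort-preserving) substitution. -/
structure Subst (σ : Sig) : Type where
  app : σ.Srt → ℕ → Term σ
  sorted : ∀ s n, Term.sort (app s n) = s

def Term.subst (θ : Subst σ) : Term σ → Term σ
  | .var s n => θ.app s n
  | .cst s c => .cst s c

/-- The index of a variable of sort `loc` (terms of sort `loc` are always
variables, since there are no constants of sort `loc`). -/
def Term.locIdx : Term σ → ℕ
  | .var _ n => n
  | .cst _ _ => 0

def Subst.locApp (θ : Subst σ) (x : ℕ) : ℕ := Term.locIdx (θ.app σ.loc x)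

def SAtom.subst (θ : Subst σ) : SAtom σ → SAtom σ
  | .pto x ts => .pto (θ.locApp x) (ts.map (Term.subst θ))
  | .pred p x args => .pred p (θ.locApp x) (args.map (Term.subst θ))

def PAtom.subst (θ : Subst σ) : PAtom σ → PAtom σ
  | .eq t u => .eq (Term.subst θ t) (Term.subst θ u)
  | .ne t u => .ne (Term.subst θ t) (Term.subst θ u)

def SymHeap.subst (θ : Subst σ) (l : SymHeap σ) : SymHeap σ :=
  ⟨l.sp.map (SAtom.subst θ), l.pu.map (PAtom.subst θ)⟩

/-- `p(t₁,…,tₙ) ⇐_ℜ λ`: `λ` is obtained from the body of a rule of `R` for `p`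
by renaming its non-parameter variables injectively to variables not occurring in
`t₁,…,tₙ`, and substituting each `tᵢ` for the `i`-th parameter. -/
def Unfolds (R : Set (Rule σ)) (p : σ.Pred) (targs : List (Term σ)) (lam : SymHeap σ) : Prop :=
  ∃ r ∈ R, r.head = p ∧ targs.length = σ.arity p ∧
  ∃ θ : Subst σ,
    (∀ (i : ℕ) (hi : i < targs.length),
      θ.app (σ.psort p i) (r.param i) = targs[i]'hi) ∧
    (∀ v : Vr σ, v ∉ Rule.paramVarSet r →
      ∃ m : ℕ, θ.app v.1 v.2 = Term.var v.1 m ∧ ∀ t ∈ targs, (v.1, m) ∉ Term.varSet t) ∧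
    (∀ v w : Vr σ, v ∉ Rule.paramVarSet r → w ∉ Rule.paramVarSet r →
      θ.app v.1 v.2 = θ.app w.1 w.2 → v = w) ∧
    lam = SymHeap.subst θ r.body

/-- Equivalence of symbolic heaps up to an injective renaming of variables fixing
the variables in `F`. -/
def VarRenEquiv (F : Set (Vr σ)) (l1 l2 : SymHeap σ) : Prop :=
  ∃ θ : Subst σ,
    (∀ v : Vr σ, ∃ m : ℕ, θ.app v.1 v.2 = Term.var v.1 m) ∧
    (∀ v w : Vr σ, θ.app v.1 v.2 = θ.app w.1 w.2 → v = w) ∧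
    (∀ v ∈ F, θ.app v.1 v.2 = Term.var v.1 v.2) ∧
    l2 = SymHeap.subst θ l1

/-! ## Interpretations, stores and heaps -/

/-- An interpretation: pairwise disjoint countably infinite universes (one per
sort; disjointness is by construction of `Interp.Val`) together with an injective
interpretation of the constants. -/
structure Interp (σ : Sig) : Type 1 where
  U : σ.Srt → Type
  countable : ∀ s, Countable (U s)
  infinite : ∀ s, Infinite (U s)
  cval : {s : σ.Srt} → σ.Const s → U s
  cval_inj : ∀ s : σ.Srt, Function.Injective (fun c : σ.Const s => cval c)

/-- The universe `𝔘_loc` of locations. -/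
abbrev Interp.Loc {σ : Sig} (I : Interp σ) : Type := I.U σ.loc

/-- The global universe `𝔘` (disjoint union of the sort universes). -/
abbrev Interp.Val {σ : Sig} (I : Interp σ) : Type := Σ s : σ.Srt, I.U s

/-- A store maps every variable to an element of the universe of its sort
(constants are interpreted by `cval`, see `tval`). -/
abbrev Store {σ : Sig} (I : Interp σ) : Type := ∀ s : σ.Srt, ℕ → I.U s

section Stores

variable {I : Interp σ}

/-- The value of a term under a store. -/
def tval (st : Store I) : Term σ → I.Val
  | .var s n => ⟨s, st s n⟩
  | .cst s c => ⟨s, I.cval c⟩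

/-- The value of a term under a store, typed by the sort of the term. -/
def tvalSorted (st : Store I) : (t : Term σ) → I.U (Term.sort t)
  | .var s n => st s n
  | .cst _ c => I.cval c

end Stores

/-- Heaps: finite partial maps from locations to finite tuples of values. -/
def Heap {σ : Sig} (I : Interp σ) : Type :=
  { f : I.Loc → Option (List I.Val) // {l : I.Loc | f l ≠ none}.Finite }

namespace Heap

variable {I : Interp σ}

/-- The domain of a heap (the set of allocated locations). -/
def dom (h : Heap I) : Set I.Loc := {l | h.1 l ≠ none}

/-- The empty heap. -/
def empty (I : Interp σ) : Heap I :=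
  ⟨fun _ => none, by
    have : {l : I.Loc | (none : Option (List I.Val)) ≠ none} = ∅ := by
      ext l; simp
    rw [this]; exact Set.finite_empty⟩

/-- Disjointness of heaps. -/
def Disj (h1 h2 : Heap I) : Prop := dom h1 ∩ dom h2 = ∅

/-- Union of heaps (used on disjoint heaps, where it is the disjoint union `⊎`). -/
def union (h1 h2 : Heap I) : Heap I :=
  ⟨fun l => (h1.1 l).orElse fun _ => h2.1 l, by
    apply (h1.2.union h2.2).subset
    intro l hl
    simp only [Set.mem_setOf_eq] at hl
    simp only [Set.mem_union, Set.mem_setOf_eq]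
    rcases e1 : h1.1 l with _ | vs
    · right
      intro e2
      rw [e1, e2] at hl
      exact hl rfl
    · left
      simp [e1]⟩

/-- The one-point heap `{l ↦ vs}`. -/
noncomputable def single (l : I.Loc) (vs : List I.Val) : Heap I :=
  ⟨fun l' => if l' = l then some vs else none, by
    apply (Set.finite_singleton l).subset
    intro x hx
    simp only [Set.mem_setOf_eq] at hx
    simp only [Set.mem_singleton_iff]
    by_contra hne
    rw [if_neg hne] at hx
    exact hx rfl⟩

/-- `h1 ⊆ h2`: `h2 = h1 ⊎ h3` for some heap `h3` disjoint from `h1`. -/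
def Sub (h1 h2 : Heap I) : Prop := ∃ h3 : Heap I, Disj h1 h3 ∧ h2 = union h1 h3

/-- The relation `ℓ →_h ℓ'`: `ℓ ∈ dom(h)` and `ℓ'` is a component (of sort `loc`)
of the tuple `h(ℓ)`. -/
def conn (h : Heap I) (l l' : I.Loc) : Prop :=
  ∃ vs, h.1 l = some vs ∧ (⟨σ.loc, l'⟩ : I.Val) ∈ vs

/-- `ref(h)`: the set of locations occurring in `h` (allocated or referred to). -/
def ref (h : Heap I) : Set I.Loc :=
  dom h ∪ {l | ∃ l0 vs, h.1 l0 = some vs ∧ (⟨σ.loc, l⟩ : I.Val) ∈ vs}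

end Heap

section PureSem

variable {I : Interp σ}

/-- Satisfaction of a pure atom (depends only on the store). -/
def PAtom.holds (st : Store I) : PAtom σ → Prop
  | .eq t u => tval st t = tval st u
  | .ne t u => tval st t ≠ tval st u

/-- Satisfaction of a pure formula (depends only on the store). -/
def pureHolds (st : Store I) (ξ : PureF σ) : Prop := ∀ a ∈ ξ, PAtom.holds st a

/-- The store `s ∘ σ` mapping every variable `x` to `s(σ(x))`. -/
def Store.comp (st : Store I) (θ : Subst σ) : Store I :=
  fun s n => (θ.sorted s n) ▸ tvalSorted st (θ.app s n)

end PureSem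

/-! ## Satisfaction -/

mutual
  /-- Satisfaction of a single spatial atom; predicate atoms are interpreted by
  unfolding with the rules of `R` (least fixpoint). -/
  inductive SatA (R : Set (Rule σ)) (I : Interp σ) : Store I → Heap I → SAtom σ → Prop where
    | pto (st : Store I) (x : ℕ) (ts : List (Term σ)) :
        SatA R I st (Heap.single (st σ.loc x) (ts.map (tval st))) (SAtom.pto x ts)
    | pred (st : Store I) (h : Heap I) (p : σ.Pred) (x : ℕ) (args : List (Term σ))
        (r : Rule σ) (st' : Store I) :
        r ∈ R → r.head = p →
        tval st' (r.paramTerm 0) = tval st (Term.var σ.loc x) →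
        (∀ (i : ℕ) (hi : i < args.length),
          tval st' (r.paramTerm (i + 1)) = tval st (args[i]'hi)) →
        SatS R I st' h r.body.sp →
        pureHolds st' r.body.pu →
        SatA R I st h (SAtom.pred p x args)

  /-- Satisfaction of a spatial formula: the heap splits into disjoint parts,
  one per atom. -/
  inductive SatS (R : Set (Rule σ)) (I : Interp σ) : Store I → Heap I → Spatial σ → Prop where
    | emp (st : Store I) : SatS R I st (Heap.empty I) 0
    | cons (st : Store I) (h1 h2 : Heap I) (a : SAtom σ) (φ : Spatial σ) :
        SatA R I st h1 a → SatS R I st h2 φ → Heap.Disj h1 h2 →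
        SatS R I st (Heap.union h1 h2) (a ::ₘ φ)
end

/-- Satisfaction `(s,h) ⊨_ℜ φ ⋏ ξ` of a symbolic heap. -/
def SatH (R : Set (Rule σ)) (I : Interp σ) (st : Store I) (h : Heap I) (l : SymHeap σ) : Prop :=
  SatS R I st h l.sp ∧ pureHolds st l.pu

/-! ## Classes of rule sets -/

/-- A deterministic set of rules: two distinct rules with the same head never
overlap (the conjunction of the equations identifying their parameters and
points-to tuples with their pure constraints is unsatisfiable; the two rules
are renamed apart, whence the two independent stores). -/
def Deterministic (R : Set (Rule σ)) (I : Interp σ) : Prop :=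
  ∀ r1 ∈ R, ∀ r2 ∈ R, r1 ≠ r2 → r1.head = r2.head →
  ∀ (ys1 : List (Term σ)) (ps1 : Multiset (SAtom σ))
    (ys2 : List (Term σ)) (ps2 : Multiset (SAtom σ)),
    r1.body.sp = (SAtom.pto (r1.param 0) ys1) ::ₘ ps1 →
    r2.body.sp = (SAtom.pto (r2.param 0) ys2) ::ₘ ps2 →
    ¬ ∃ st1 st2 : Store I,
      (∀ i < σ.arity r1.head, tval st1 (r1.paramTerm i) = tval st2 (r2.paramTerm i)) ∧
      ys1.map (tval st1) = ys2.map (tval st2) ∧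
      pureHolds st1 r1.body.pu ∧ pureHolds st2 r2.body.pu

/-- The standing hypotheses: `R` is a nonempty loc-deterministic set of P-rules
satisfying Assumptions 1 (every predicate is productive) and 2 (every loc-sorted
parameter index `i ≥ 2`, here 0-indexed `i ≥ 1`, is an outgoing parameter index),
in which every constant occurs. -/
structure GoodRules (R : Set (Rule σ)) (I : Interp σ) : Prop where
  nonempty : R.Nonempty
  prules : ∀ r ∈ R, Rule.IsPRule r
  deterministic : Deterministic R I
  loc_diseq : ∀ r ∈ R, ∀ pa ∈ r.body.pu,
    ∃ x y : ℕ, pa = PAtom.ne (Term.var σ.loc x) (Term.var σ.loc y)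
  productive : ∀ p : σ.Pred, Productive R p
  out_total : ∀ (p : σ.Pred) (i : ℕ), 1 ≤ i → i < σ.arity p → σ.psort p i = σ.loc →
    OutParam R p i
  const_occurs : ∀ (s : σ.Srt) (c : σ.Const s), ∃ r ∈ R, Term.cst s c ∈ Rule.termSet r

/-! ## Sequents -/

/-- A sequent `λ ⊢_ℜ^V γ`. -/
structure Sequent (σ : Sig) : Type where
  lhs : SymHeap σ
  rhs : SymHeap σ
  V : Multiset ℕ

/-- A store is injective on a multiset `V` of loc-variables:
`{x,y} ⊆ₘ V → s(x) ≠ s(y)`. -/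
def StoreInjOn {I : Interp σ} (st : Store I) (V : Multiset ℕ) : Prop :=
  ∀ x y : ℕ, ({x, y} : Multiset ℕ) ≤ V → st σ.loc x ≠ st σ.loc y

/-- A counter-model of a sequent. -/
def CounterModel (R : Set (Rule σ)) (I : Interp σ) (S : Sequent σ)
    (st : Store I) (h : Heap I) : Prop :=
  SatH R I st h S.lhs ∧ ¬ SatH R I st h S.rhs ∧
  (∀ x ∈ S.V, st σ.loc x ∉ Heap.dom h) ∧ StoreInjOn st S.V

/-- Validity of a sequent: no counter-model. -/
def SeqValid (R : Set (Rule σ)) (I : Interp σ) (S : Sequent σ) : Prop :=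
  ¬ ∃ (st : Store I) (h : Heap I), CounterModel R I S st h

/-- Axioms (modulo AC): `φ ⋏ (ξ ∧ ξ') ⊢ φ ⋏ ξ`; `φ ⋏ (ξ ∧ x ≉ x) ⊢ γ`;
a heap-unsatisfiable left-hand side; an allocated variable in `V`, or a
repeated variable in `V`. -/
def IsAxiom (S : Sequent σ) : Prop :=
  (S.lhs.sp = S.rhs.sp ∧ ∀ a ∈ S.rhs.pu, a ∈ S.lhs.pu) ∨
  (∃ v : Vr σ, PAtom.ne (Term.var v.1 v.2) (Term.var v.1 v.2) ∈ S.lhs.pu) ∨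
  (¬ (alloc S.lhs.sp).Nodup) ∨
  (∃ x ∈ alloc S.lhs.sp, x ∈ S.V) ∨
  (¬ S.V.Nodup)

/-- The relation `λ ▷_V ξ` (Definition of `▷`). -/
def Entails (lam : SymHeap σ) (V : Multiset ℕ) (ξ : PureF σ) : Prop :=
  ∀ ζ ∈ ξ,
    ζ ∈ lam.pu ∨
    (∃ v : Vr σ, ζ = PAtom.eq (Term.var v.1 v.2) (Term.var v.1 v.2)) ∨
    (∃ (s1 : σ.Srt) (c1 : σ.Const s1) (s2 : σ.Srt) (c2 : σ.Const s2),
      ζ = PAtom.ne (Term.cst s1 c1) (Term.cst s2 c2) ∧ Term.cst s1 c1 ≠ Term.cst s2 c2) ∨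
    (∃ x1 x2 : ℕ, ζ = PAtom.ne (Term.var σ.loc x1) (Term.var σ.loc x2) ∧
      ({x1, x2} : Multiset ℕ) ≤ SymHeap.alloc lam + V)

/-- A `→`-compatible model of a spatial formula. -/
def PathCompatible (R : Set (Rule σ)) (I : Interp σ) (st : Store I) (h : Heap I)
    (φ : Spatial σ) : Prop :=
  SatS R I st h φ ∧
  ∀ x y : ℕ, Relation.ReflTransGen (Heap.conn h) (st σ.loc x) (st σ.loc y) →
    Relation.ReflTransGen (PathTo R φ) x y

/-! ## 𝔘-mappings -/

/-- A `𝔘`-mapping: a sort-preserving map on the universe fixing the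
interpretations of constants. -/
structure UMap {σ : Sig} (I : Interp σ) : Type where
  f : ∀ s : σ.Srt, I.U s → I.U s
  fix_const : ∀ (s : σ.Srt) (c : σ.Const s), f s (I.cval c) = I.cval c

/-- A `𝔘`-mapping, as a map on `𝔘`. -/
def UMap.onVal {σ : Sig} {I : Interp σ} (ν : UMap I) : I.Val → I.Val :=
  fun v => ⟨v.1, ν.f v.1 v.2⟩

/-- The store `ν ∘ s`. -/
def UMap.compStore {σ : Sig} {I : Interp σ} (ν : UMap I) (st : Store I) : Store I :=
  fun s n => ν.f s (st s n)


/-! ## Auxiliary lemmas for STATEMENT 16 -/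

section Aux16

variable {I : Interp σ}

theorem Heap.ext' {h1 h2 : Heap I} (h : ∀ l, h1.1 l = h2.1 l) : h1 = h2 :=
  Subtype.ext (funext h)

theorem Heap.mem_dom_union {h1 h2 : Heap I} {l : I.Loc} :
    l ∈ Heap.dom (Heap.union h1 h2) ↔ l ∈ Heap.dom h1 ∨ l ∈ Heap.dom h2 := by
  simp only [Heap.dom, Heap.union, Set.mem_setOf_eq]
  cases e : h1.1 l <;> simp [Option.orElse, e]

theorem Heap.disj_iff {h1 h2 : Heap I} :
    Heap.Disj h1 h2 ↔ ∀ l, l ∈ Heap.dom h1 → l ∉ Heap.dom h2 := by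
  unfold Heap.Disj
  rw [Set.eq_empty_iff_forall_notMem]
  simp [Set.mem_inter_iff, not_and]

theorem Heap.Disj.symm' {h1 h2 : Heap I} (h : Heap.Disj h1 h2) : Heap.Disj h2 h1 := by
  rw [Heap.disj_iff] at h ⊢
  intro l hl2 hl1
  exact h l hl1 hl2

theorem Heap.not_dom_of_disj {h1 h2 : Heap I} (hd : Heap.Disj h1 h2) {l : I.Loc}
    (hl : l ∈ Heap.dom h1) : h2.1 l = none := by
  have := Heap.disj_iff.mp hd l hl
  simp only [Heap.dom, Set.mem_setOf_eq, not_not] at this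
  exact this

theorem Heap.union_comm {h1 h2 : Heap I} (hd : Heap.Disj h1 h2) :
    Heap.union h1 h2 = Heap.union h2 h1 := by
  apply Heap.ext'
  intro l
  cases e1 : h1.1 l with
  | none => cases e2 : h2.1 l <;> simp [Heap.union, Option.orElse, e1, e2]
  | some v1 =>
    have hl1 : l ∈ Heap.dom h1 := by simp [Heap.dom, e1]
    have e2 : h2.1 l = none := Heap.not_dom_of_disj hd hl1
    simp [Heap.union, Option.orElse, e1, e2]

theorem Heap.union_assoc (h1 h2 h3 : Heap I) :
    Heap.union (Heap.union h1 h2) h3 = Heap.union h1 (Heap.union h2 h3) := by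
  apply Heap.ext'
  intro l
  cases e1 : h1.1 l <;> simp [Heap.union, Option.orElse, e1]

theorem Heap.union_left_comm {h1 h2 : Heap I} (h3 : Heap I) (hd : Heap.Disj h1 h2) :
    Heap.union h1 (Heap.union h2 h3) = Heap.union h2 (Heap.union h1 h3) := by
  apply Heap.ext'
  intro l
  cases e1 : h1.1 l with
  | none => cases e2 : h2.1 l <;> simp [Heap.union, Option.orElse, e1, e2]
  | some v1 =>
    have hl1 : l ∈ Heap.dom h1 := by simp [Heap.dom, e1]
    have e2 : h2.1 l = none := Heap.not_dom_of_disj hd hl1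
    simp [Heap.union, Option.orElse, e1, e2]

theorem Heap.empty_union (h : Heap I) : Heap.union (Heap.empty I) h = h := by
  apply Heap.ext'
  intro l
  simp [Heap.union, Heap.empty, Option.orElse]

theorem Heap.disj_empty (h : Heap I) : Heap.Disj (Heap.empty I) h := by
  rw [Heap.disj_iff]
  intro l hl
  simp [Heap.dom, Heap.empty] at hl

theorem Heap.disj_union_right {h1 h2 h3 : Heap I} (hd2 : Heap.Disj h1 h2)
    (hd3 : Heap.Disj h1 h3) : Heap.Disj h1 (Heap.union h2 h3) := by
  rw [Heap.disj_iff] at hd2 hd3 ⊢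
  intro l hl hl'
  rcases Heap.mem_dom_union.mp hl' with h | h
  · exact hd2 l hl h
  · exact hd3 l hl h

theorem Heap.disj_union_left {h1 h2 h3 : Heap I} (hd1 : Heap.Disj h1 h3)
    (hd2 : Heap.Disj h2 h3) : Heap.Disj (Heap.union h1 h2) h3 :=
  (Heap.disj_union_right hd1.symm' hd2.symm').symm'

theorem Heap.disj_of_dom_subset {h1 h2 h3 : Heap I} (hd : Heap.Disj h1 h2)
    (hsub : Heap.dom h3 ⊆ Heap.dom h2) : Heap.Disj h1 h3 := by
  rw [Heap.disj_iff] at hd ⊢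
  intro l hl hl3
  exact hd l hl (hsub hl3)

theorem Heap.dom_union_subset_left {h1 h2 : Heap I} :
    Heap.dom h1 ⊆ Heap.dom (Heap.union h1 h2) :=
  fun _ hl => Heap.mem_dom_union.mpr (Or.inl hl)

theorem Heap.dom_union_subset_right {h1 h2 : Heap I} :
    Heap.dom h2 ⊆ Heap.dom (Heap.union h1 h2) :=
  fun _ hl => Heap.mem_dom_union.mpr (Or.inr hl)

variable {R : Set (Rule σ)} {st : Store I}

theorem satS_zero_heap' {h : Heap I} {μ : Spatial σ} (hs : SatS R I st h μ) (hμ : μ = 0) :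
    h = Heap.empty I := by
  cases hs with
  | emp => rfl
  | cons st h1 h2 a φ _ _ _ => exact absurd hμ (Multiset.cons_ne_zero)

theorem satS_zero_heap {h : Heap I} (hs : SatS R I st h 0) : h = Heap.empty I :=
  satS_zero_heap' hs rfl

/-- Pull a single atom out of a satisfied spatial formula. -/
theorem satS_pull (μ : Spatial σ) (h : Heap I) (hs : SatS R I st h μ) :
    ∀ a ∈ μ, ∃ h1 h2, Heap.Disj h1 h2 ∧ h = Heap.union h1 h2 ∧ SatA R I st h1 a ∧
      SatS R I st h2 (μ.erase a) := by
  induction μ using Multiset.strongInductionOn generalizing h with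
  | ih μ IH =>
  intro a ha
  cases hs with
  | emp => simp at ha
  | cons st h1 h2 b φ hA hS hd =>
    by_cases hab : a = b
    · subst hab
      exact ⟨h1, h2, hd, rfl, hA, by rwa [Multiset.erase_cons_head]⟩
    · have ha' : a ∈ φ := by
        rcases Multiset.mem_cons.mp ha with h' | h'
        · exact absurd h' hab
        · exact h'
      obtain ⟨g1, g2, hg, he, hA', hS'⟩ := IH φ (Multiset.lt_cons_self φ b) h2 hS a ha'
      have hsub1 : Heap.dom g1 ⊆ Heap.dom h2 := by
        rw [he]; exact Heap.dom_union_subset_left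
      have hsub2 : Heap.dom g2 ⊆ Heap.dom h2 := by
        rw [he]; exact Heap.dom_union_subset_right
      have d_h1g1 : Heap.Disj h1 g1 := Heap.disj_of_dom_subset hd hsub1
      have d_h1g2 : Heap.Disj h1 g2 := Heap.disj_of_dom_subset hd hsub2
      refine ⟨g1, Heap.union h1 g2, Heap.disj_union_right d_h1g1.symm' hg, ?_, hA', ?_⟩
      · rw [he]
        exact Heap.union_left_comm g2 d_h1g1
      · rw [Multiset.erase_cons_tail φ (fun hc => hab hc.symm)]
        exact SatS.cons st h1 g2 b (φ.erase a) hA hS' d_h1g2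

/-- Composition of satisfaction over `*`. -/
theorem satS_compose (φ : Spatial σ) {h1 h2 : Heap I} (ψ : Spatial σ)
    (hs1 : SatS R I st h1 φ) (hs2 : SatS R I st h2 ψ) (hd : Heap.Disj h1 h2) :
    SatS R I st (Heap.union h1 h2) (φ + ψ) := by
  induction φ using Multiset.strongInductionOn generalizing h1 with
  | ih φ IH =>
  by_cases hφ : φ = 0
  · subst hφ
    rw [satS_zero_heap hs1, Heap.empty_union, zero_add]
    exact hs2
  · obtain ⟨a, ha⟩ := Multiset.exists_mem_of_ne_zero hφ
    obtain ⟨u1, u2, hu, he, hA, hS⟩ := satS_pull φ h1 hs1 a ha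
    have hsub1 : Heap.dom u1 ⊆ Heap.dom h1 := by
      rw [he]; exact Heap.dom_union_subset_left
    have hsub2 : Heap.dom u2 ⊆ Heap.dom h1 := by
      rw [he]; exact Heap.dom_union_subset_right
    have d_u2h2 : Heap.Disj u2 h2 := Heap.disj_of_dom_subset hd.symm' hsub2 |>.symm'
    have d_u1h2 : Heap.Disj u1 h2 := Heap.disj_of_dom_subset hd.symm' hsub1 |>.symm'
    have hrec := IH (φ.erase a) (Multiset.erase_lt.mpr ha) hS d_u2h2
    have hcons := SatS.cons st u1 (Heap.union u2 h2) a (φ.erase a + ψ) hA hrec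
      (Heap.disj_union_right hu d_u1h2)
    have heq : Heap.union u1 (Heap.union u2 h2) = Heap.union h1 h2 := by
      rw [he, Heap.union_assoc]
    have hmul : a ::ₘ (φ.erase a + ψ) = φ + ψ := by
      rw [← Multiset.cons_add, Multiset.cons_erase ha]
    rwa [heq, hmul] at hcons

/-- Splitting of satisfaction over `*`. -/
theorem satS_split (φ : Spatial σ) {h : Heap I} (ψ : Spatial σ)
    (hs : SatS R I st h (φ + ψ)) :
    ∃ h1 h2, Heap.Disj h1 h2 ∧ h = Heap.union h1 h2 ∧
      SatS R I st h1 φ ∧ SatS R I st h2 ψ := by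
  induction φ using Multiset.strongInductionOn generalizing h with
  | ih φ IH =>
  by_cases hφ : φ = 0
  · subst hφ
    rw [zero_add] at hs
    exact ⟨Heap.empty I, h, Heap.disj_empty h, (Heap.empty_union h).symm, SatS.emp st, hs⟩
  · obtain ⟨a, ha⟩ := Multiset.exists_mem_of_ne_zero hφ
    have ha' : a ∈ φ + ψ := Multiset.mem_add.mpr (Or.inl ha)
    obtain ⟨u1, u2, hu, he, hA, hS⟩ := satS_pull (φ + ψ) h hs a ha'
    rw [Multiset.erase_add_left_pos ψ ha] at hS
    obtain ⟨v1, v2, hv, he2, hS1, hS2⟩ := IH (φ.erase a) (Multiset.erase_lt.mpr ha) hS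
    have hsubv1 : Heap.dom v1 ⊆ Heap.dom u2 := by
      rw [he2]; exact Heap.dom_union_subset_left
    have hsubv2 : Heap.dom v2 ⊆ Heap.dom u2 := by
      rw [he2]; exact Heap.dom_union_subset_right
    have d_u1v1 : Heap.Disj u1 v1 := Heap.disj_of_dom_subset hu hsubv1
    have d_u1v2 : Heap.Disj u1 v2 := Heap.disj_of_dom_subset hu hsubv2
    refine ⟨Heap.union u1 v1, v2, Heap.disj_union_left d_u1v2 hv, ?_, ?_, hS2⟩
    · rw [he, he2, Heap.union_assoc]
    · have := SatS.cons st u1 v1 a (φ.erase a) hA hS1 d_u1v1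
      rwa [Multiset.cons_erase ha] at this

theorem satA_pto_dom {x : ℕ} {ts : List (Term σ)} {h : Heap I}
    (hA : SatA R I st h (SAtom.pto x ts)) : st σ.loc x ∈ Heap.dom h := by
  cases hA with
  | pto => simp [Heap.dom, Heap.single]

theorem satA_root_dom (hR : GoodRules R I) {h : Heap I} {a : SAtom σ}
    (hA : SatA R I st h a) : st σ.loc a.root ∈ Heap.dom h := by
  cases hA with
  | pto st x ts => simp [SAtom.root, Heap.dom, Heap.single]
  | pred st h p x args r st' hr hhead htv hargs hS hpu =>
    obtain ⟨ys, ps, hbody, -, -, -, -, -⟩ := hR.prules r hr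
    have hmem : SAtom.pto (r.param 0) ys ∈ r.body.sp := by
      rw [hbody]; exact Multiset.mem_cons_self _ _
    obtain ⟨h1, h2, -, he, hA', -⟩ := satS_pull _ _ hS _ hmem
    have hdm : st' σ.loc (r.param 0) ∈ Heap.dom h1 := satA_pto_dom hA'
    have hval : st' σ.loc (r.param 0) = st σ.loc x := by
      rw [Rule.paramTerm, σ.psort_zero r.head] at htv
      simpa [tval] using htv
    rw [he]
    simp only [SAtom.root]
    rw [← hval]
    exact Heap.mem_dom_union.mpr (Or.inl hdm)

theorem alloc_mem_dom (hR : GoodRules R I) {h : Heap I} {φ : Spatial σ}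
    (hs : SatS R I st h φ) {x : ℕ} (hx : x ∈ alloc φ) : st σ.loc x ∈ Heap.dom h := by
  obtain ⟨a, ha, rfl⟩ := Multiset.mem_map.mp hx
  obtain ⟨h1, h2, -, rfl, hA, -⟩ := satS_pull _ _ hs a ha
  exact Heap.mem_dom_union.mpr (Or.inl (satA_root_dom hR hA))

/-- A multiset below a map comes from a multiset below the source. -/
theorem exists_le_map {α β : Type*} (f : α → β) (s : Multiset α) :
    ∀ t : Multiset β, t ≤ s.map f → ∃ s', s' ≤ s ∧ s'.map f = t := by
  induction s using Multiset.induction_on with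
  | empty =>
    intro t ht
    simp only [Multiset.map_zero, Multiset.le_zero] at ht
    exact ⟨0, le_refl _, by simp [ht]⟩
  | cons b s0 IH =>
    intro t ht
    rw [Multiset.map_cons] at ht
    by_cases hb : f b ∈ t
    · obtain ⟨t', rfl⟩ := Multiset.exists_cons_of_mem hb
      have ht' : t' ≤ s0.map f := (Multiset.cons_le_cons_iff (f b)).mp ht
      obtain ⟨s', hs', rfl⟩ := IH t' ht'
      exact ⟨b ::ₘ s', Multiset.cons_le_cons b hs', by simp⟩
    · have ht' : t ≤ s0.map f := by
        rw [Multiset.le_iff_count] at ht ⊢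
        intro z
        have hz := ht z
        rw [Multiset.count_cons] at hz
        by_cases hzb : z = f b
        · subst hzb
          simp [Multiset.count_eq_zero.mpr hb]
        · simpa [hzb] using hz
      obtain ⟨s', hs', rfl⟩ := IH t ht'
      exact ⟨s', le_trans hs' (Multiset.le_cons_self s0 b), rfl⟩

theorem alloc_inj (hR : GoodRules R I) {h : Heap I} {φ : Spatial σ}
    (hs : SatS R I st h φ) {x y : ℕ} (hxy : ({x, y} : Multiset ℕ) ≤ alloc φ) :
    st σ.loc x ≠ st σ.loc y := by
  obtain ⟨φ', hle, hmap⟩ := exists_le_map SAtom.root φ {x, y} hxy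
  have hx' : x ∈ Multiset.map SAtom.root φ' := by rw [hmap]; simp
  obtain ⟨a, ha, hax⟩ := Multiset.mem_map.mp hx'
  obtain ⟨φ'', rfl⟩ := Multiset.exists_cons_of_mem ha
  rw [Multiset.map_cons, hax] at hmap
  have hmap2 : Multiset.map SAtom.root φ'' = ({y} : Multiset ℕ) := by
    have h' : x ::ₘ Multiset.map SAtom.root φ'' = x ::ₘ ({y} : Multiset ℕ) := hmap
    rwa [Multiset.cons_inj_right] at h'
  obtain ⟨b, hb, hby⟩ := Multiset.map_eq_singleton.mp hmap2
  subst hb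
  obtain ⟨ρ, hρ⟩ := Multiset.le_iff_exists_add.mp hle
  have hρ' : φ = ({a} : Multiset (SAtom σ)) + (({b} : Multiset (SAtom σ)) + ρ) := by
    rw [hρ]
    simp [Multiset.singleton_add, Multiset.cons_add]
    exact Multiset.cons_swap a b ρ
  rw [hρ'] at hs
  obtain ⟨hA, h', hd, rfl, hsA, hs'⟩ := satS_split _ _ hs
  obtain ⟨hB, h'', hd2, rfl, hsB, -⟩ := satS_split _ _ hs'
  have hxd : st σ.loc x ∈ Heap.dom hA := by
    refine alloc_mem_dom hR hsA ?_
    simp [alloc, hax]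
  have hyd : st σ.loc y ∈ Heap.dom (Heap.union hB h'') := by
    refine Heap.dom_union_subset_left ?_
    refine alloc_mem_dom hR hsB ?_
    simp [alloc, hby]
  intro hc
  exact Heap.disj_iff.mp hd _ hxd (hc ▸ hyd)

theorem le_add_split {α : Type*} {s u v : Multiset α} (h : s ≤ u + v) :
    ∃ s1 s2, s1 ≤ u ∧ s2 ≤ v ∧ s = s1 + s2 := by
  classical
  refine ⟨s ∩ u, s - s ∩ u, (Multiset.inter_le_right : s ∩ u ≤ u), ?_,
    (add_tsub_cancel_of_le (Multiset.inter_le_left : s ∩ u ≤ s)).symm⟩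
  rw [Multiset.le_iff_count]
  intro z
  have hc := Multiset.le_iff_count.mp h z
  rw [Multiset.count_add] at hc
  rw [Multiset.count_sub, Multiset.count_inter]
  omega

theorem pair_le_add {α : Type*} {x y : α} {u v : Multiset α}
    (h : ({x, y} : Multiset α) ≤ u + v) :
    ({x, y} : Multiset α) ≤ u ∨ ({x, y} : Multiset α) ≤ v ∨
      (x ∈ u ∧ y ∈ v) ∨ (y ∈ u ∧ x ∈ v) := by
  obtain ⟨s1, s2, h1, h2, he⟩ := le_add_split h
  have hx : x ∈ s1 ∨ x ∈ s2 := by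
    rw [← Multiset.mem_add, ← he]; simp
  rcases hx with hx | hx
  · obtain ⟨s1', rfl⟩ := Multiset.exists_cons_of_mem hx
    have he' : s1' + s2 = ({y} : Multiset α) := by
      have h' : x ::ₘ (s1' + s2) = x ::ₘ ({y} : Multiset α) := by
        rw [← Multiset.cons_add]; exact he.symm
      rwa [Multiset.cons_inj_right] at h'
    have hy : y ∈ s1' ∨ y ∈ s2 := by
      rw [← Multiset.mem_add, he']; simp
    rcases hy with hy | hy
    · left
      refine le_trans ?_ h1
      exact Multiset.cons_le_cons x (Multiset.singleton_le.mpr hy)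
    · right; right; left
      exact ⟨Multiset.mem_of_le h1 (Multiset.mem_cons_self x s1'),
        Multiset.mem_of_le h2 hy⟩
  · obtain ⟨s2', rfl⟩ := Multiset.exists_cons_of_mem hx
    have he' : s1 + s2' = ({y} : Multiset α) := by
      have h' : x ::ₘ (s1 + s2') = x ::ₘ ({y} : Multiset α) := by
        rw [← Multiset.add_cons]; exact he.symm
      rwa [Multiset.cons_inj_right] at h'
    have hy : y ∈ s1 ∨ y ∈ s2' := by
      rw [← Multiset.mem_add, he']; simp
    rcases hy with hy | hy
    · right; right; right
      exact ⟨Multiset.mem_of_le h1 hy,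
        Multiset.mem_of_le h2 (Multiset.mem_cons_self x s2')⟩
    · right; left
      refine le_trans ?_ h2
      exact Multiset.cons_le_cons x (Multiset.singleton_le.mpr hy)

end Aux16

/-- soundness of rule S.  Every counter-model `(s,h)` of the
conclusion yields a counter-model `(s,h')`, with `h'` a proper subheap of `h`,
of one of the two premises; in particular if both premises are valid then so is
the conclusion. -/
theorem STATEMENT_16 {σ : Sig} {I : Interp σ} (R : Set (Rule σ)) (hR : GoodRules R I)
    (φ1 φ2 ψ1 ψ2 : Spatial σ) (ξ1 ξ2 ζ1 ζ2 : PureF σ) (V : Multiset ℕ)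
    (hφ1 : φ1 ≠ 0) (hφ2 : φ2 ≠ 0) :
    (∀ (st : Store I) (h : Heap I),
      CounterModel R I ⟨⟨φ1 + φ2, ξ1 + ξ2⟩, ⟨ψ1 + ψ2, ζ1 + ζ2⟩, V⟩ st h →
      ∃ h' : Heap I, Heap.Sub h' h ∧ h' ≠ h ∧
        (CounterModel R I ⟨⟨φ1, ξ1⟩, ⟨ψ1, ζ1⟩, V + alloc φ2⟩ st h' ∨
         CounterModel R I ⟨⟨φ2, ξ2⟩, ⟨ψ2, ζ2⟩, V + alloc φ1⟩ st h')) ∧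
    (SeqValid R I ⟨⟨φ1, ξ1⟩, ⟨ψ1, ζ1⟩, V + alloc φ2⟩ →
     SeqValid R I ⟨⟨φ2, ξ2⟩, ⟨ψ2, ζ2⟩, V + alloc φ1⟩ →
     SeqValid R I ⟨⟨φ1 + φ2, ξ1 + ξ2⟩, ⟨ψ1 + ψ2, ζ1 + ζ2⟩, V⟩) := by
  have main : ∀ (st : Store I) (h : Heap I),
      CounterModel R I ⟨⟨φ1 + φ2, ξ1 + ξ2⟩, ⟨ψ1 + ψ2, ζ1 + ζ2⟩, V⟩ st h →
      ∃ h' : Heap I, Heap.Sub h' h ∧ h' ≠ h ∧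
        (CounterModel R I ⟨⟨φ1, ξ1⟩, ⟨ψ1, ζ1⟩, V + alloc φ2⟩ st h' ∨
         CounterModel R I ⟨⟨φ2, ξ2⟩, ⟨ψ2, ζ2⟩, V + alloc φ1⟩ st h') := by
    intro st h hcm
    obtain ⟨⟨hsp, hpu⟩, hnr, hV, hinj⟩ := hcm
    obtain ⟨h1, h2, hd, rfl, hs1, hs2⟩ := satS_split φ1 φ2 hsp
    have hpu1 : pureHolds st ξ1 := fun a ha => hpu a (Multiset.mem_add.mpr (Or.inl ha))
    have hpu2 : pureHolds st ξ2 := fun a ha => hpu a (Multiset.mem_add.mpr (Or.inr ha))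
    have hdisj := Heap.disj_iff.mp hd
    have hdom1 : ∀ x ∈ alloc φ1, st σ.loc x ∈ Heap.dom h1 :=
      fun x hx => alloc_mem_dom hR hs1 hx
    have hdom2 : ∀ x ∈ alloc φ2, st σ.loc x ∈ Heap.dom h2 :=
      fun x hx => alloc_mem_dom hR hs2 hx
    have hV1 : ∀ x ∈ V + alloc φ2, st σ.loc x ∉ Heap.dom h1 := by
      intro x hx hc
      rcases Multiset.mem_add.mp hx with hx' | hx'
      · exact hV x hx' (Heap.mem_dom_union.mpr (Or.inl hc))
      · exact hdisj _ hc (hdom2 x hx')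
    have hV2 : ∀ x ∈ V + alloc φ1, st σ.loc x ∉ Heap.dom h2 := by
      intro x hx hc
      rcases Multiset.mem_add.mp hx with hx' | hx'
      · exact hV x hx' (Heap.mem_dom_union.mpr (Or.inr hc))
      · exact hdisj _ (hdom1 x hx') hc
    have hinj1 : StoreInjOn st (V + alloc φ2) := by
      intro x y hxy
      rcases pair_le_add hxy with hp | hp | ⟨hxu, hyv⟩ | ⟨hyu, hxv⟩
      · exact hinj x y hp
      · exact alloc_inj hR hs2 hp
      · intro hc
        exact hV x hxu (hc ▸ Heap.mem_dom_union.mpr (Or.inr (hdom2 y hyv)))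
      · intro hc
        exact hV y hyu (hc ▸ Heap.mem_dom_union.mpr (Or.inr (hdom2 x hxv)))
    have hinj2 : StoreInjOn st (V + alloc φ1) := by
      intro x y hxy
      rcases pair_le_add hxy with hp | hp | ⟨hxu, hyv⟩ | ⟨hyu, hxv⟩
      · exact hinj x y hp
      · exact alloc_inj hR hs1 hp
      · intro hc
        exact hV x hxu (hc ▸ Heap.mem_dom_union.mpr (Or.inl (hdom1 y hyv)))
      · intro hc
        exact hV y hyu (hc ▸ Heap.mem_dom_union.mpr (Or.inl (hdom1 x hxv)))
    have hne1 : ∃ l, l ∈ Heap.dom h1 := by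
      obtain ⟨a, ha⟩ := Multiset.exists_mem_of_ne_zero hφ1
      exact ⟨_, alloc_mem_dom hR hs1 (Multiset.mem_map_of_mem _ ha)⟩
    have hne2 : ∃ l, l ∈ Heap.dom h2 := by
      obtain ⟨a, ha⟩ := Multiset.exists_mem_of_ne_zero hφ2
      exact ⟨_, alloc_mem_dom hR hs2 (Multiset.mem_map_of_mem _ ha)⟩
    have hne_h1 : h1 ≠ Heap.union h1 h2 := by
      intro hc
      obtain ⟨l, hl⟩ := hne2
      have hl1 : l ∈ Heap.dom h1 := by
        rw [hc]; exact Heap.mem_dom_union.mpr (Or.inr hl)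
      exact hdisj l hl1 hl
    have hne_h2 : h2 ≠ Heap.union h1 h2 := by
      intro hc
      obtain ⟨l, hl⟩ := hne1
      have hl2 : l ∈ Heap.dom h2 := by
        rw [hc]; exact Heap.mem_dom_union.mpr (Or.inl hl)
      exact hdisj l hl hl2
    have hsub1 : Heap.Sub h1 (Heap.union h1 h2) := ⟨h2, hd, rfl⟩
    have hsub2 : Heap.Sub h2 (Heap.union h1 h2) := ⟨h1, hd.symm', Heap.union_comm hd⟩
    by_cases hz1 : pureHolds st ζ1
    · by_cases hz2 : pureHolds st ζ2
      · by_cases hq1 : SatS R I st h1 ψ1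
        · have hq2 : ¬ SatS R I st h2 ψ2 := by
            intro hq2
            refine hnr ⟨satS_compose ψ1 ψ2 hq1 hq2 hd, ?_⟩
            intro a ha
            rcases Multiset.mem_add.mp ha with ha' | ha'
            · exact hz1 a ha'
            · exact hz2 a ha'
          refine ⟨h2, hsub2, hne_h2, Or.inr ⟨⟨hs2, hpu2⟩, ?_, hV2, hinj2⟩⟩
          intro hc
          exact hq2 hc.1
        · refine ⟨h1, hsub1, hne_h1, Or.inl ⟨⟨hs1, hpu1⟩, ?_, hV1, hinj1⟩⟩
          intro hc
          exact hq1 hc.1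
      · refine ⟨h2, hsub2, hne_h2, Or.inr ⟨⟨hs2, hpu2⟩, ?_, hV2, hinj2⟩⟩
        intro hc
        exact hz2 hc.2
    · refine ⟨h1, hsub1, hne_h1, Or.inl ⟨⟨hs1, hpu1⟩, ?_, hV1, hinj1⟩⟩
      intro hc
      exact hz1 hc.2
  refine ⟨main, ?_⟩
  intro hv1 hv2 hex
  obtain ⟨st, h, hcm⟩ := hex
  obtain ⟨h', -, -, hc | hc⟩ := main st h hcm
  · exact hv1 ⟨st, h', hc⟩
  · exact hv2 ⟨st, h', hc⟩

end SLID
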